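/- There are no integers x, y, z with (48x − 72y + 48z + 85)/35 and (−12x + 18y − 12z + 75)/35 both non-negative integers. -/
import Mathlib

theorem stmt18 : ¬ ∃ x y z : ℤ, ((35:ℤ) ∣ (48*x - 72*y + 48*z + 85) ∧ 0 ≤ (48*x - 72*y + 48*z + 85)) ∧ ((35:ℤ) ∣ (-12*x + 18*y - 12*z + 75) ∧ 0 ≤ (-12*x + 18*y - 12*z + 75)) := by
  rintro ⟨x, y, z, ⟨h1, h2⟩, h3, h4⟩
  omega
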